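/- arXiv:1603.06798 — 2 statements merged into one kernel-verified Lean document; each statement's English description precedes it below -/
import Mathlib

section
/- Let μ be a stationary probability on A^I and ν₁, ν₂ channels to B^I and C^I that are stationary with respect to μ. The product channel ν₁ × ν₂ is output weakly mixing with respect to μ if and only if ν₁ and ν₂ are both output weakly mixing with respect to μ. -/
set_option linter.unusedSectionVars false
set_option linter.unnecessarySimpa false
set_option linter.unusedTactic false
set_option maxHeartbeats 1000000


open MeasureTheory ProbabilityTheory Filter
open scoped ProbabilityTheory

/-- The one-sided shift on a sequence space. -/
def seqShift {A : Type*} : (ℕ → A) → (ℕ → A) := fun x i => x (i + 1)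

/-- A channel `ν` is output weakly mixing w.r.t. `μ` if for all measurable output sets
`G, G'` the Cesàro averages of `|ν(x, T^{-i}G ∩ G') - ν(x, T^{-i}G)·ν(x, G')|` tend to 0
for μ-a.e. `x`. -/
def OutputWeaklyMixing {X Y : Type*} [MeasurableSpace X] [MeasurableSpace Y]
    (ν : ProbabilityTheory.Kernel X Y) (μ : Measure X) (T : Y → Y) : Prop :=
  ∀ G G' : Set Y, MeasurableSet G → MeasurableSet G' →
    ∀ᵐ x ∂μ, Tendsto
      (fun n : ℕ => (∑ i ∈ Finset.range n,
        |((ν x) ((T^[i]) ⁻¹' G ∩ G')).toReal -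
          ((ν x) ((T^[i]) ⁻¹' G)).toReal * ((ν x) G').toReal|) / (n : ℝ))
      atTop (nhds 0)

open scoped Topology ENNReal

section Garsia
variable {X : Type*} [MeasurableSpace X]

private noncomputable def garsiaPhi (S : X → X) (φ : X → ℝ) : ℕ → X → ℝ
  | 0 => fun _ => 0
  | (n+1) => fun x => max 0 (φ x + garsiaPhi S φ n (S x))

private lemma garsiaPhi_succ (S : X → X) (φ : X → ℝ) (n : ℕ) (x : X) :
    garsiaPhi S φ (n+1) x = max 0 (φ x + garsiaPhi S φ n (S x)) := rfl

private lemma garsiaPhi_nonneg (S : X → X) (φ : X → ℝ) (n : ℕ) (x : X) :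
    0 ≤ garsiaPhi S φ n x := by
  cases n with
  | zero => simp [garsiaPhi]
  | succ n => simp [garsiaPhi]

private lemma garsiaPhi_measurable {S : X → X} (hS : Measurable S) {φ : X → ℝ}
    (hφ : Measurable φ) (n : ℕ) : Measurable (garsiaPhi S φ n) := by
  induction n with
  | zero => simpa [garsiaPhi] using measurable_const
  | succ n ih =>
    exact measurable_const.max (hφ.add (ih.comp hS))

private lemma garsiaPhi_mono (S : X → X) (φ : X → ℝ) (n : ℕ) (x : X) :
    garsiaPhi S φ n x ≤ garsiaPhi S φ (n+1) x := by
  induction n generalizing x with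
  | zero => exact garsiaPhi_nonneg S φ 1 x
  | succ n ih =>
    exact max_le_max le_rfl (add_le_add le_rfl (ih (S x)))

private lemma garsiaPhi_le (S : X → X) {φ : X → ℝ} (hφ1 : ∀ x, φ x ≤ 1) (n : ℕ) (x : X) :
    garsiaPhi S φ n x ≤ n := by
  induction n generalizing x with
  | zero => simp [garsiaPhi]
  | succ n ih =>
    simp only [garsiaPhi]
    refine max_le (by positivity) ?_
    have := ih (S x); have := hφ1 x
    push_cast; linarith

/-- partial sums dominated by `garsiaPhi`. -/
private lemma sum_le_garsiaPhi (S : X → X) (φ : X → ℝ) (n : ℕ) :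
    ∀ k, 1 ≤ k → k ≤ n → ∀ x, (∑ i ∈ Finset.range k, φ (S^[i] x)) ≤ garsiaPhi S φ n x := by
  induction n with
  | zero => intro k hk1 hk0; omega
  | succ n ih =>
    intro k hk1 hkn x
    obtain ⟨j, rfl⟩ : ∃ j, k = j + 1 := ⟨k - 1, by omega⟩
    have hsum : (∑ i ∈ Finset.range (j+1), φ (S^[i] x))
        = φ x + ∑ i ∈ Finset.range j, φ (S^[i] (S x)) := by
      rw [Finset.sum_range_succ']
      simp only [Function.iterate_succ_apply, Function.iterate_zero_apply]
      ring
    rw [hsum]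
    have h2 : (∑ i ∈ Finset.range j, φ (S^[i] (S x))) ≤ garsiaPhi S φ n (S x) := by
      rcases Nat.eq_zero_or_pos j with hj | hj
      · subst hj; simpa using garsiaPhi_nonneg S φ n (S x)
      · exact ih j hj (by omega) (S x)
    calc φ x + ∑ i ∈ Finset.range j, φ (S^[i] (S x)) ≤ φ x + garsiaPhi S φ n (S x) := by linarith
    _ ≤ garsiaPhi S φ (n+1) x := le_max_right _ _

private lemma garsiaPhi_key (S : X → X) (φ : X → ℝ) (n : ℕ) (x : X)
    (h : 0 < garsiaPhi S φ (n+1) x) :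
    garsiaPhi S φ (n+1) x - garsiaPhi S φ (n+1) (S x) ≤ φ x := by
  have h1 : garsiaPhi S φ (n+1) x = φ x + garsiaPhi S φ n (S x) := by
    have := h
    simp only [garsiaPhi] at this ⊢
    rcases max_cases (0:ℝ) (φ x + garsiaPhi S φ n (S x)) with ⟨h2, h3⟩ | ⟨h2, h3⟩
    · rw [h2] at this; linarith
    · exact h2
  have h2 := garsiaPhi_mono S φ n (S x)
  linarith


private lemma maximal_ergodic (μ : Measure X) [IsProbabilityMeasure μ] {S : X → X}
    (hS : MeasurePreserving S μ μ) {f : X → ℝ} (hf : Measurable f)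
    (hf0 : ∀ x, 0 ≤ f x) (hf1 : ∀ x, f x ≤ 1) {ε : ℝ} (hε : 0 < ε) :
    μ {x | ∃ n : ℕ, 1 ≤ n ∧ ε * n < ∑ i ∈ Finset.range n, f (S^[i] x)}
      ≤ ENNReal.ofReal ((∫ x, f x ∂μ) / ε) := by
  set φ : X → ℝ := fun x => f x - ε with hφdef
  have hφm : Measurable φ := hf.sub measurable_const
  have hφ1 : ∀ x, φ x ≤ 1 := fun x => by have := hf1 x; simp [hφdef]; linarith
  set Φ := garsiaPhi S φ with hΦdef
  have hΦm : ∀ n, Measurable (Φ n) := garsiaPhi_measurable hS.measurable hφm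
  have hΦ0 : ∀ n x, 0 ≤ Φ n x := garsiaPhi_nonneg S φ
  have hΦle : ∀ n x, Φ n x ≤ n := garsiaPhi_le S hφ1
  -- integrability
  have hΦint : ∀ n, Integrable (Φ n) μ := by
    intro n
    refine Integrable.mono' (integrable_const (n : ℝ)) (hΦm n).aestronglyMeasurable ?_
    exact Filter.Eventually.of_forall fun x => by
      rw [Real.norm_eq_abs, abs_of_nonneg (hΦ0 n x)]; exact hΦle n x
  have hΦSint : ∀ n, Integrable (fun x => Φ n (S x)) μ := by
    intro n
    refine Integrable.mono' (integrable_const (n : ℝ)) ((hΦm n).comp hS.measurable).aestronglyMeasurable ?_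
    exact Filter.Eventually.of_forall fun x => by
      rw [Real.norm_eq_abs, abs_of_nonneg (hΦ0 n (S x))]; exact hΦle n (S x)
  have hφint : Integrable φ μ := by
    refine Integrable.mono' (integrable_const (1 + ε)) hφm.aestronglyMeasurable ?_
    exact Filter.Eventually.of_forall fun x => by
      rw [Real.norm_eq_abs, abs_le]; constructor <;> [have := hf0 x; have := hf1 x] <;>
        simp [hφdef] <;> linarith
  -- the sets
  set E : ℕ → Set X := fun n => {x | 0 < Φ n x} with hEdef
  have hEm : ∀ n, MeasurableSet (E n) := fun n => measurableSet_lt measurable_const (hΦm n)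
  have hEmono : Monotone E := by
    refine monotone_nat_of_le_succ fun n x hx => ?_
    exact lt_of_lt_of_le hx (garsiaPhi_mono S φ n x)
  -- ∫ Φ n ∘ S = ∫ Φ n
  have hintS : ∀ n, ∫ x, Φ n (S x) ∂μ = ∫ x, Φ n x ∂μ := by
    intro n
    have := integral_map (μ := μ) hS.measurable.aemeasurable
      (hΦm n).aestronglyMeasurable (f := Φ n)
    rw [hS.map_eq] at this; exact this.symm
  -- key integral inequality on E (n+1)
  have hstep : ∀ n : ℕ, 0 ≤ ∫ x in E (n+1), φ x ∂μ := by
    intro n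
    have h1 : ∫ x in E (n+1), (Φ (n+1) x - Φ (n+1) (S x)) ∂μ ≤ ∫ x in E (n+1), φ x ∂μ := by
      refine setIntegral_mono_on (((hΦint (n+1)).sub (hΦSint (n+1))).integrableOn)
        (hφint.integrableOn) (hEm (n+1)) ?_
      intro x hx
      exact garsiaPhi_key S φ n x hx
    have h2 : ∫ x in E (n+1), (Φ (n+1) x - Φ (n+1) (S x)) ∂μ
        = (∫ x in E (n+1), Φ (n+1) x ∂μ) - ∫ x in E (n+1), Φ (n+1) (S x) ∂μ :=
      integral_sub (hΦint (n+1)).integrableOn (hΦSint (n+1)).integrableOn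
    have h3 : ∫ x in E (n+1), Φ (n+1) x ∂μ = ∫ x, Φ (n+1) x ∂μ := by
      have hcompl : ∫ x in (E (n+1))ᶜ, Φ (n+1) x ∂μ = 0 := by
        refine setIntegral_eq_zero_of_forall_eq_zero fun x hx => ?_
        have : ¬ 0 < Φ (n+1) x := hx
        have := hΦ0 (n+1) x
        linarith
      have := integral_add_compl (hEm (n+1)) (hΦint (n+1))
      rw [hcompl] at this; linarith
    have h4 : ∫ x in E (n+1), Φ (n+1) (S x) ∂μ ≤ ∫ x, Φ (n+1) (S x) ∂μ := by
      refine setIntegral_le_integral (hΦSint (n+1)) ?_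
      exact Filter.Eventually.of_forall fun x => hΦ0 (n+1) (S x)
    rw [h2] at h1
    rw [h3] at h1
    rw [hintS (n+1)] at h4
    linarith
  -- pass to the union
  set Einf := ⋃ n, E n with hEinf
  have hEinfm : MeasurableSet Einf := MeasurableSet.iUnion hEm
  have hlim : Tendsto (fun n => ∫ x in E n, φ x ∂μ) atTop (𝓝 (∫ x in Einf, φ x ∂μ)) :=
    tendsto_setIntegral_of_monotone hEm hEmono hφint.integrableOn
  have hEpos : 0 ≤ ∫ x in Einf, φ x ∂μ := by
    refine le_of_tendsto_of_tendsto tendsto_const_nhds hlim ?_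
    filter_upwards [eventually_ge_atTop 1] with n hn
    obtain ⟨m, rfl⟩ : ∃ m, n = m + 1 := ⟨n - 1, by omega⟩
    exact hstep m
  have hfint : Integrable f μ := by
    refine Integrable.mono' (integrable_const (1 : ℝ)) hf.aestronglyMeasurable ?_
    exact Filter.Eventually.of_forall fun x => by
      rw [Real.norm_eq_abs, abs_of_nonneg (hf0 x)]; exact hf1 x
  -- rewrite as f and ε
  have hsplit : ∫ x in Einf, φ x ∂μ = (∫ x in Einf, f x ∂μ) - ε * (μ Einf).toReal := by
    have h1 : ∫ x in Einf, φ x ∂μ = (∫ x in Einf, f x ∂μ) - ∫ x in Einf, (ε : ℝ) ∂μ :=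
      integral_sub hfint.integrableOn (integrable_const ε).integrableOn
    rw [h1, setIntegral_const]
    simp [smul_eq_mul]; rw [measureReal_def]; ring
  have hfbound : ∫ x in Einf, f x ∂μ ≤ ∫ x, f x ∂μ :=
    setIntegral_le_integral hfint (Filter.Eventually.of_forall hf0)
  have hmueps : (μ Einf).toReal ≤ (∫ x, f x ∂μ) / ε := by
    rw [le_div_iff₀ hε]
    rw [hsplit] at hEpos
    linarith
  have hfin : μ Einf ≠ ⊤ := measure_ne_top μ _
  have hmu : μ Einf ≤ ENNReal.ofReal ((∫ x, f x ∂μ) / ε) := by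
    conv_lhs => rw [← ENNReal.ofReal_toReal hfin]
    exact ENNReal.ofReal_le_ofReal hmueps
  refine le_trans (measure_mono ?_) hmu
  rintro x ⟨n, hn1, hnlt⟩
  have hsum : ∑ i ∈ Finset.range n, φ (S^[i] x)
      = (∑ i ∈ Finset.range n, f (S^[i] x)) - n * ε := by
    simp [hφdef, Finset.sum_sub_distrib, Finset.sum_const, Finset.card_range, nsmul_eq_mul]
  have hpos : 0 < ∑ i ∈ Finset.range n, φ (S^[i] x) := by
    rw [hsum]; nlinarith [hnlt]
  have hle := sum_le_garsiaPhi S φ n n hn1 le_rfl x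
  exact Set.mem_iUnion.2 ⟨n, lt_of_lt_of_le hpos hle⟩

private lemma ams_control (μ : Measure X) [IsProbabilityMeasure μ] {S : X → X}
    (hS : MeasurePreserving S μ μ) {g : ℕ → X → ℝ} (hgm : ∀ N, Measurable (g N))
    (hg0 : ∀ N x, 0 ≤ g N x) (hg1 : ∀ N x, g N x ≤ 1)
    (hgto : ∀ x, Tendsto (fun N => g N x) atTop (𝓝 0)) :
    ∀ᵐ x ∂μ, ∀ ε : ℝ, 0 < ε → ∃ N, ∀ n : ℕ, 1 ≤ n →
      (∑ i ∈ Finset.range n, g N (S^[i] x)) ≤ ε * n := by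
  have hint : ∀ N, Integrable (g N) μ := by
    intro N
    refine Integrable.mono' (integrable_const (1 : ℝ)) (hgm N).aestronglyMeasurable ?_
    exact Filter.Eventually.of_forall fun x => by
      rw [Real.norm_eq_abs, abs_of_nonneg (hg0 N x)]; exact hg1 N x
  have hI : Tendsto (fun N => ∫ x, g N x ∂μ) atTop (𝓝 0) := by
    have h0 : (0 : ℝ) = ∫ (_ : X), (0:ℝ) ∂μ := by simp
    rw [h0]
    refine tendsto_integral_of_dominated_convergence (fun _ => (1:ℝ))
      (fun N => (hgm N).aestronglyMeasurable) (integrable_const 1) ?_ ?_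
    · intro N
      exact Filter.Eventually.of_forall fun x => by
        rw [Real.norm_eq_abs, abs_of_nonneg (hg0 N x)]; exact hg1 N x
    · exact Filter.Eventually.of_forall fun x => hgto x
  have hk : ∀ k : ℕ, ∀ᵐ x ∂μ, ∃ N, ∀ n : ℕ, 1 ≤ n →
      (∑ i ∈ Finset.range n, g N (S^[i] x)) ≤ (1 / (k+1) : ℝ) * n := by
    intro k
    set ε₀ : ℝ := 1 / (k+1) with hε₀def
    have hε₀ : 0 < ε₀ := by positivity
    set Bad : ℕ → Set X := fun N =>
      {x | ∃ n : ℕ, 1 ≤ n ∧ ε₀ * n < ∑ i ∈ Finset.range n, g N (S^[i] x)} with hBad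
    have hBadle : ∀ N, μ (⋂ M, Bad M) ≤ ENNReal.ofReal ((∫ x, g N x ∂μ) / ε₀) := by
      intro N
      refine le_trans (measure_mono (Set.iInter_subset _ N)) ?_
      exact maximal_ergodic μ hS (hgm N) (hg0 N) (hg1 N) hε₀
    have hzero : μ (⋂ M, Bad M) = 0 := by
      have htend : Tendsto (fun N => ENNReal.ofReal ((∫ x, g N x ∂μ) / ε₀)) atTop (𝓝 0) := by
        have : Tendsto (fun N => (∫ x, g N x ∂μ) / ε₀) atTop (𝓝 (0 / ε₀)) :=
          hI.div_const ε₀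
        rw [zero_div] at this
        simpa using ENNReal.tendsto_ofReal this
      have hle0 : μ (⋂ M, Bad M) ≤ 0 :=
        le_of_tendsto_of_tendsto' tendsto_const_nhds htend hBadle
      exact le_antisymm hle0 (by simp)
    have : ∀ᵐ x ∂μ, x ∉ ⋂ M, Bad M := by
      rw [← compl_mem_ae_iff] at hzero
      exact hzero
    filter_upwards [this] with x hx
    rw [Set.mem_iInter] at hx
    push_neg at hx
    obtain ⟨N, hN⟩ := hx
    refine ⟨N, fun n hn => ?_⟩
    by_contra hcon
    exact hN ⟨n, hn, by linarith⟩
  rw [← ae_all_iff] at hk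
  filter_upwards [hk] with x hx ε hε
  obtain ⟨k, hklt⟩ := exists_nat_one_div_lt hε
  obtain ⟨N, hN⟩ := hx k
  refine ⟨N, fun n hn => ?_⟩
  refine le_trans (hN n hn) ?_
  have : (0:ℝ) ≤ n := Nat.cast_nonneg n
  push_cast at hklt ⊢
  nlinarith [hklt.le]

end Garsia
section Shift
variable {A B C : Type*} [MeasurableSpace A] [MeasurableSpace B] [MeasurableSpace C]

private lemma measurable_seqShift : Measurable (seqShift (A := A)) :=
  measurable_pi_lambda _ fun i => measurable_pi_apply (i + 1)

private lemma kernel_stationary_iterate {X Y : Type*} [MeasurableSpace X] [MeasurableSpace Y]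
    (μ : Measure X) {SX : X → X} (hSX : MeasurePreserving SX μ μ) {SY : Y → Y}
    (hSY : Measurable SY) (ν : Kernel X Y)
    (hν : ∀ G : Set Y, MeasurableSet G → ∀ᵐ x ∂μ, ν x (SY ⁻¹' G) = ν (SX x) G)
    (G : Set Y) (hG : MeasurableSet G) (i : ℕ) :
    ∀ᵐ x ∂μ, ν x (SY^[i] ⁻¹' G) = ν (SX^[i] x) G := by
  induction i with
  | zero => simp
  | succ i ih =>
    have h1 := hν (SY^[i] ⁻¹' G) (hSY.iterate i hG)
    have h2 : ∀ᵐ x ∂μ, ν (SX x) (SY^[i] ⁻¹' G) = ν (SX^[i] (SX x)) G :=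
      hSX.quasiMeasurePreserving.ae ih
    filter_upwards [h1, h2] with x hx1 hx2
    rw [Function.iterate_succ, Set.preimage_comp, hx1, hx2, Function.iterate_succ_apply]

variable (μ : Measure (ℕ → A)) [IsProbabilityMeasure μ]
  (ν₁ : Kernel (ℕ → A) (ℕ → B)) (ν₂ : Kernel (ℕ → A) (ℕ → C))
  [IsMarkovKernel ν₁] [IsMarkovKernel ν₂]

private lemma prod_shift_ae (hμ : μ.map seqShift = μ)
    (hν₁ : ∀ G : Set (ℕ → B), MeasurableSet G →
      ∀ᵐ x ∂μ, ν₁ x (seqShift ⁻¹' G) = ν₁ (seqShift x) G)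
    (hν₂ : ∀ H : Set (ℕ → C), MeasurableSet H →
      ∀ᵐ x ∂μ, ν₂ x (seqShift ⁻¹' H) = ν₂ (seqShift x) H)
    (i : ℕ) :
    ∀ W : Set ((ℕ → B) × (ℕ → C)), MeasurableSet W →
      ∀ᵐ x ∂μ, (ν₁ ×ₖ ν₂) x ((Prod.map seqShift seqShift)^[i] ⁻¹' W)
        = (ν₁ ×ₖ ν₂) (seqShift^[i] x) W := by
  have hmp : MeasurePreserving seqShift μ μ := ⟨measurable_seqShift, hμ⟩
  have hTm : Measurable ((Prod.map seqShift seqShift : (ℕ → B) × (ℕ → C) → _)^[i]) :=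
    (measurable_seqShift.prodMap measurable_seqShift).iterate i
  refine MeasurableSpace.induction_on_inter (C := fun W _ =>
      ∀ᵐ x ∂μ, (ν₁ ×ₖ ν₂) x ((Prod.map seqShift seqShift)^[i] ⁻¹' W)
        = (ν₁ ×ₖ ν₂) (seqShift^[i] x) W)
    generateFrom_prod.symm isPiSystem_prod ?_ ?_ ?_ ?_
  · simp
  · rintro t ⟨D, hD, E, hE, rfl⟩
    simp only [Set.mem_setOf_eq] at hD hE
    have h1 := kernel_stationary_iterate μ hmp measurable_seqShift ν₁ hν₁ D hD i
    have h2 := kernel_stationary_iterate μ hmp measurable_seqShift ν₂ hν₂ E hE i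
    filter_upwards [h1, h2] with x hx1 hx2
    rw [Prod.map_iterate, Set.preimage_prod_map_prod, Kernel.prod_apply, Kernel.prod_apply,
      Measure.prod_prod, Measure.prod_prod, hx1, hx2]
  · intro t ht hC
    filter_upwards [hC] with x hx
    rw [Set.preimage_compl,
      measure_compl (hTm ht) (measure_ne_top _ _),
      measure_compl ht (measure_ne_top _ _), hx]
    simp
  · intro f hdisj hmeas hC
    have hall := (ae_all_iff).mpr hC
    filter_upwards [hall] with x hx
    rw [Set.preimage_iUnion,
      measure_iUnion (fun m n hmn => (hdisj hmn).preimage _) (fun n => hTm (hmeas n)),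
      measure_iUnion hdisj hmeas]
    exact tsum_congr fun n => hx n

end Shift
section MeasAlg
variable {Y : Type*} [MeasurableSpace Y] (m : Measure Y) [IsProbabilityMeasure m]

private noncomputable def wmTerm (m : Measure Y) (T : Y → Y) (G G' : Set Y) (i : ℕ) : ℝ :=
  |(m ((T^[i]) ⁻¹' G ∩ G')).toReal - (m ((T^[i]) ⁻¹' G)).toReal * (m G').toReal|

private lemma wmTerm_nonneg (T : Y → Y) (G G' : Set Y) (i : ℕ) : 0 ≤ wmTerm m T G G' i :=
  abs_nonneg _

private lemma rto_le_one (W : Set Y) : (m W).toReal ≤ 1 := by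
  calc (m W).toReal ≤ (1 : ℝ≥0∞).toReal := ENNReal.toReal_mono ENNReal.one_ne_top prob_le_one
  _ = 1 := by simp

private lemma rto_mono {V W : Set Y} (h : V ⊆ W) : (m V).toReal ≤ (m W).toReal :=
  ENNReal.toReal_mono (measure_ne_top m W) (measure_mono h)

private lemma rto_inter_compl {A : Set Y} (hA : MeasurableSet A) (G' : Set Y) :
    (m (Aᶜ ∩ G')).toReal = (m G').toReal - (m (A ∩ G')).toReal := by
  have h := measure_inter_add_diff (μ := m) G' hA
  have hd : G' \ A = Aᶜ ∩ G' := by ext y; simp [Set.mem_diff]; tauto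
  have hi : G' ∩ A = A ∩ G' := Set.inter_comm _ _
  rw [hd, hi] at h
  have := ENNReal.toReal_add (measure_ne_top m (A ∩ G')) (measure_ne_top m (Aᶜ ∩ G'))
  rw [h] at this
  linarith

private lemma rto_compl {A : Set Y} (hA : MeasurableSet A) :
    (m Aᶜ).toReal = 1 - (m A).toReal := by
  have h := measure_add_measure_compl (μ := m) hA
  rw [measure_univ] at h
  have := ENNReal.toReal_add (measure_ne_top m A) (measure_ne_top m Aᶜ)
  rw [h] at this
  simp at this
  linarith

private lemma wmTerm_compl_left {T : Y → Y} (hT : Measurable T) {G : Set Y}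
    (hG : MeasurableSet G) (G' : Set Y) (i : ℕ) :
    wmTerm m T Gᶜ G' i = wmTerm m T G G' i := by
  have hA : MeasurableSet ((T^[i]) ⁻¹' G) := (hT.iterate i) hG
  unfold wmTerm
  rw [Set.preimage_compl, rto_inter_compl m hA, rto_compl m hA]
  rw [abs_sub_comm]
  congr 1
  ring

private lemma wmTerm_compl_right (T : Y → Y) (G : Set Y) {G' : Set Y}
    (hG' : MeasurableSet G') (i : ℕ) :
    wmTerm m T G G'ᶜ i = wmTerm m T G G' i := by
  have h1 : (m ((T^[i]) ⁻¹' G ∩ G'ᶜ)).toReal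
      = (m ((T^[i]) ⁻¹' G)).toReal - (m ((T^[i]) ⁻¹' G ∩ G')).toReal := by
    have h := measure_inter_add_diff (μ := m) ((T^[i]) ⁻¹' G) hG'
    have hd : (T^[i]) ⁻¹' G \ G' = (T^[i]) ⁻¹' G ∩ G'ᶜ := rfl
    rw [hd] at h
    have := ENNReal.toReal_add (measure_ne_top m ((T^[i]) ⁻¹' G ∩ G'))
      (measure_ne_top m ((T^[i]) ⁻¹' G ∩ G'ᶜ))
    rw [h] at this
    linarith
  unfold wmTerm
  rw [h1, rto_compl m hG', abs_sub_comm]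
  congr 1
  ring

private lemma wmTerm_le_two (T : Y → Y) (G G' : Set Y) (i : ℕ) :
    wmTerm m T G G' i ≤ 2 * (m ((T^[i]) ⁻¹' G)).toReal := by
  have h1 : (m ((T^[i]) ⁻¹' G ∩ G')).toReal ≤ (m ((T^[i]) ⁻¹' G)).toReal :=
    rto_mono m Set.inter_subset_left
  have h2 : (m ((T^[i]) ⁻¹' G)).toReal * (m G').toReal ≤ (m ((T^[i]) ⁻¹' G)).toReal := by
    nlinarith [rto_le_one m G', ENNReal.toReal_nonneg (a := m ((T^[i]) ⁻¹' G)),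
      ENNReal.toReal_nonneg (a := m G')]
  have h0 : 0 ≤ (m ((T^[i]) ⁻¹' G)).toReal * (m G').toReal :=
    mul_nonneg ENNReal.toReal_nonneg ENNReal.toReal_nonneg
  rw [wmTerm, abs_le]
  constructor <;>
    linarith [ENNReal.toReal_nonneg (a := m ((T^[i]) ⁻¹' G ∩ G'))]

private lemma wmTerm_le_two' (T : Y → Y) (G G' : Set Y) (i : ℕ) :
    wmTerm m T G G' i ≤ 2 * (m G').toReal := by
  have h1 : (m ((T^[i]) ⁻¹' G ∩ G')).toReal ≤ (m G').toReal :=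
    rto_mono m Set.inter_subset_right
  have h2 : (m ((T^[i]) ⁻¹' G)).toReal * (m G').toReal ≤ (m G').toReal := by
    nlinarith [rto_le_one m ((T^[i]) ⁻¹' G), ENNReal.toReal_nonneg (a := m ((T^[i]) ⁻¹' G)),
      ENNReal.toReal_nonneg (a := m G')]
  have h0 : 0 ≤ (m ((T^[i]) ⁻¹' G)).toReal * (m G').toReal :=
    mul_nonneg ENNReal.toReal_nonneg ENNReal.toReal_nonneg
  rw [wmTerm, abs_le]
  constructor <;>
    linarith [ENNReal.toReal_nonneg (a := m ((T^[i]) ⁻¹' G ∩ G'))]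

end MeasAlg
section MeasAlg2
variable {Y : Type*} [MeasurableSpace Y] (m : Measure Y) [IsProbabilityMeasure m]

private lemma abs_decomp {v1 r1 v2 r2 g : ℝ} :
    |(v1 + r1) - (v2 + r2) * g| ≤ |v1 - v2 * g| + |r1 - r2 * g| := by
  have h : (v1 + r1) - (v2 + r2) * g = (v1 - v2 * g) + (r1 - r2 * g) := by ring
  rw [h]; exact abs_add_le _ _

private lemma abs_decomp_right {v1 r1 v2 r2 g : ℝ} :
    |(v1 + r1) - g * (v2 + r2)| ≤ |v1 - g * v2| + |r1 - g * r2| := by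
  have h : (v1 + r1) - g * (v2 + r2) = (v1 - g * v2) + (r1 - g * r2) := by ring
  rw [h]; exact abs_add_le _ _

private lemma wmTerm_union_split {T : Y → Y} (hT : Measurable T) {V R : Set Y}
    (hR : MeasurableSet R) (hd : Disjoint V R) {G' : Set Y}
    (hG' : MeasurableSet G') (i : ℕ) :
    wmTerm m T (V ∪ R) G' i ≤ wmTerm m T V G' i + wmTerm m T R G' i := by
  have hdp : Disjoint ((T^[i]) ⁻¹' V) ((T^[i]) ⁻¹' R) := hd.preimage _
  have h1 : (m ((T^[i]) ⁻¹' (V ∪ R) ∩ G')).toReal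
      = (m ((T^[i]) ⁻¹' V ∩ G')).toReal + (m ((T^[i]) ⁻¹' R ∩ G')).toReal := by
    rw [Set.preimage_union, Set.union_inter_distrib_right,
      measure_union (hdp.mono Set.inter_subset_left Set.inter_subset_left)
        (((hT.iterate i) hR).inter hG'),
      ENNReal.toReal_add (measure_ne_top _ _) (measure_ne_top _ _)]
  have h2 : (m ((T^[i]) ⁻¹' (V ∪ R))).toReal
      = (m ((T^[i]) ⁻¹' V)).toReal + (m ((T^[i]) ⁻¹' R)).toReal := by
    rw [Set.preimage_union, measure_union hdp ((hT.iterate i) hR),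
      ENNReal.toReal_add (measure_ne_top _ _) (measure_ne_top _ _)]
  unfold wmTerm
  rw [h1, h2]
  exact abs_decomp

private lemma wmTerm_union_split_right {T : Y → Y} (hT : Measurable T) {V R G : Set Y}
    (hR : MeasurableSet R) (hd : Disjoint V R) (hG : MeasurableSet G) (i : ℕ) :
    wmTerm m T G (V ∪ R) i ≤ wmTerm m T G V i + wmTerm m T G R i := by
  have h1 : (m ((T^[i]) ⁻¹' G ∩ (V ∪ R))).toReal
      = (m ((T^[i]) ⁻¹' G ∩ V)).toReal + (m ((T^[i]) ⁻¹' G ∩ R)).toReal := by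
    rw [Set.inter_union_distrib_left,
      measure_union (hd.mono Set.inter_subset_right Set.inter_subset_right)
        (((hT.iterate i) hG).inter hR),
      ENNReal.toReal_add (measure_ne_top _ _) (measure_ne_top _ _)]
  have h2 : (m (V ∪ R)).toReal = (m V).toReal + (m R).toReal := by
    rw [measure_union hd hR, ENNReal.toReal_add (measure_ne_top _ _) (measure_ne_top _ _)]
  unfold wmTerm
  rw [h1, h2]
  exact abs_decomp_right

private lemma wmTerm_biUnion_le {T : Y → Y} (hT : Measurable T) {f : ℕ → Set Y}
    (hf : ∀ k, MeasurableSet (f k)) (hdisj : Pairwise (Function.onFun Disjoint f)) {G' : Set Y}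
    (hG' : MeasurableSet G') (i : ℕ) : ∀ N : ℕ,
    wmTerm m T (⋃ k ∈ Finset.range N, f k) G' i
      ≤ ∑ k ∈ Finset.range N, wmTerm m T (f k) G' i := by
  intro N
  induction N with
  | zero =>
    simp only [Finset.range_zero, Finset.sum_empty]
    have : (⋃ k ∈ (∅ : Finset ℕ), f k) = (∅ : Set Y) := by simp
    rw [this]
    unfold wmTerm
    simp
  | succ N ih =>
    have hU : (⋃ k ∈ Finset.range (N+1), f k) = (⋃ k ∈ Finset.range N, f k) ∪ f N := by
      rw [Finset.range_add_one]
      simp [Set.union_comm]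
    rw [hU, Finset.sum_range_succ]
    have hd : Disjoint (⋃ k ∈ Finset.range N, f k) (f N) := by
      rw [Set.disjoint_left]
      rintro y hy hyN
      simp only [Set.mem_iUnion, Finset.mem_range] at hy
      obtain ⟨k, hk, hyk⟩ := hy
      exact Set.disjoint_left.mp (hdisj (Nat.ne_of_lt hk)) hyk hyN
    calc wmTerm m T ((⋃ k ∈ Finset.range N, f k) ∪ f N) G' i
        ≤ wmTerm m T (⋃ k ∈ Finset.range N, f k) G' i + wmTerm m T (f N) G' i :=
          wmTerm_union_split m hT (hf N) hd hG' i
      _ ≤ (∑ k ∈ Finset.range N, wmTerm m T (f k) G' i) + wmTerm m T (f N) G' i := by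
          linarith [ih]

private lemma wmTerm_biUnion_le_right {T : Y → Y} (hT : Measurable T) {f : ℕ → Set Y}
    (hf : ∀ k, MeasurableSet (f k)) (hdisj : Pairwise (Function.onFun Disjoint f)) {G : Set Y}
    (hG : MeasurableSet G) (i : ℕ) : ∀ N : ℕ,
    wmTerm m T G (⋃ k ∈ Finset.range N, f k) i
      ≤ ∑ k ∈ Finset.range N, wmTerm m T G (f k) i := by
  intro N
  induction N with
  | zero =>
    simp only [Finset.range_zero, Finset.sum_empty]
    have : (⋃ k ∈ (∅ : Finset ℕ), f k) = (∅ : Set Y) := by simp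
    rw [this]
    unfold wmTerm
    simp
  | succ N ih =>
    have hU : (⋃ k ∈ Finset.range (N+1), f k) = (⋃ k ∈ Finset.range N, f k) ∪ f N := by
      rw [Finset.range_add_one]
      simp [Set.union_comm]
    rw [hU, Finset.sum_range_succ]
    have hd : Disjoint (⋃ k ∈ Finset.range N, f k) (f N) := by
      rw [Set.disjoint_left]
      rintro y hy hyN
      simp only [Set.mem_iUnion, Finset.mem_range] at hy
      obtain ⟨k, hk, hyk⟩ := hy
      exact Set.disjoint_left.mp (hdisj (Nat.ne_of_lt hk)) hyk hyN
    calc wmTerm m T G ((⋃ k ∈ Finset.range N, f k) ∪ f N) i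
        ≤ wmTerm m T G (⋃ k ∈ Finset.range N, f k) i + wmTerm m T G (f N) i :=
          wmTerm_union_split_right m hT (hf N) hd hG i
      _ ≤ (∑ k ∈ Finset.range N, wmTerm m T G (f k) i) + wmTerm m T G (f N) i := by
          linarith [ih]

private lemma iUnion_split (f : ℕ → Set Y) (N : ℕ) :
    (⋃ k, f k) = (⋃ k ∈ Finset.range N, f k) ∪ (⋃ k, f (N + k)) := by
  ext y
  simp only [Set.mem_iUnion, Set.mem_union, Finset.mem_range]
  constructor
  · rintro ⟨k, hk⟩
    rcases lt_or_ge k N with h | h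
    · exact Or.inl ⟨k, h, hk⟩
    · exact Or.inr ⟨k - N, by rwa [Nat.add_sub_cancel' h]⟩
  · rintro (⟨k, _, hk⟩ | ⟨k, hk⟩) <;> exact ⟨_, hk⟩

private lemma iUnion_tail_disjoint {f : ℕ → Set Y} (hdisj : Pairwise (Function.onFun Disjoint f)) (N : ℕ) :
    Disjoint (⋃ k ∈ Finset.range N, f k) (⋃ k, f (N + k)) := by
  rw [Set.disjoint_left]
  rintro y hy hy2
  simp only [Set.mem_iUnion, Finset.mem_range] at hy hy2
  obtain ⟨k, hk, hyk⟩ := hy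
  obtain ⟨j, hyj⟩ := hy2
  exact Set.disjoint_left.mp (hdisj (show k ≠ N + j by omega)) hyk hyj

private lemma wmTerm_iUnion_le {T : Y → Y} (hT : Measurable T) {f : ℕ → Set Y}
    (hf : ∀ k, MeasurableSet (f k)) (hdisj : Pairwise (Function.onFun Disjoint f)) {G' : Set Y}
    (hG' : MeasurableSet G') (i N : ℕ) :
    wmTerm m T (⋃ k, f k) G' i ≤ (∑ k ∈ Finset.range N, wmTerm m T (f k) G' i)
      + 2 * (m ((T^[i]) ⁻¹' (⋃ k, f (N + k)))).toReal := by
  rw [iUnion_split f N]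
  calc wmTerm m T ((⋃ k ∈ Finset.range N, f k) ∪ ⋃ k, f (N + k)) G' i
      ≤ wmTerm m T (⋃ k ∈ Finset.range N, f k) G' i + wmTerm m T (⋃ k, f (N + k)) G' i :=
        wmTerm_union_split m hT (MeasurableSet.iUnion fun k => hf (N + k))
          (iUnion_tail_disjoint hdisj N) hG' i
    _ ≤ (∑ k ∈ Finset.range N, wmTerm m T (f k) G' i)
        + 2 * (m ((T^[i]) ⁻¹' (⋃ k, f (N + k)))).toReal :=
        add_le_add (wmTerm_biUnion_le m hT hf hdisj hG' i N) (wmTerm_le_two m T _ G' i)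

private lemma wmTerm_iUnion_le_right {T : Y → Y} (hT : Measurable T) {f : ℕ → Set Y}
    (hf : ∀ k, MeasurableSet (f k)) (hdisj : Pairwise (Function.onFun Disjoint f)) {G : Set Y}
    (hG : MeasurableSet G) (i N : ℕ) :
    wmTerm m T G (⋃ k, f k) i ≤ (∑ k ∈ Finset.range N, wmTerm m T G (f k) i)
      + 2 * (m (⋃ k, f (N + k))).toReal := by
  rw [iUnion_split f N]
  calc wmTerm m T G ((⋃ k ∈ Finset.range N, f k) ∪ ⋃ k, f (N + k)) i
      ≤ wmTerm m T G (⋃ k ∈ Finset.range N, f k) i + wmTerm m T G (⋃ k, f (N + k)) i :=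
        wmTerm_union_split_right m hT (MeasurableSet.iUnion fun k => hf (N + k))
          (iUnion_tail_disjoint hdisj N) hG i
    _ ≤ (∑ k ∈ Finset.range N, wmTerm m T G (f k) i) + 2 * (m (⋃ k, f (N + k))).toReal :=
        add_le_add (wmTerm_biUnion_le_right m hT hf hdisj hG i N) (wmTerm_le_two' m T G _ i)

end MeasAlg2
section Main

private lemma tendsto_avg_zero {u : ℕ → ℝ} (h0 : ∀ n, 0 ≤ u n)
    (h : ∀ ε : ℝ, 0 < ε → ∀ᶠ n in atTop, u n ≤ ε) : Tendsto u atTop (𝓝 0) := by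
  rw [Metric.tendsto_atTop]
  intro ε hε
  obtain ⟨N, hN⟩ := eventually_atTop.mp (h (ε/2) (by linarith))
  exact ⟨N, fun n hn => by
    rw [Real.dist_eq, sub_zero, abs_of_nonneg (h0 n)]; linarith [hN n hn]⟩

private lemma abs_prod_mix {a A P b B Q : ℝ} (hb0 : 0 ≤ b) (hb1 : b ≤ 1)
    (hA0 : 0 ≤ A) (hA1 : A ≤ 1) (hP0 : 0 ≤ P) (hP1 : P ≤ 1) :
    |a * b - A * B * (P * Q)| ≤ |a - A * P| + |b - B * Q| := by
  have h : a * b - A * B * (P * Q) = (a - A * P) * b + (A * P) * (b - B * Q) := by ring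
  rw [h]
  calc |(a - A * P) * b + A * P * (b - B * Q)|
      ≤ |(a - A * P) * b| + |A * P * (b - B * Q)| := abs_add_le _ _
    _ = |a - A * P| * |b| + |A * P| * |b - B * Q| := by rw [abs_mul, abs_mul]
    _ ≤ |a - A * P| * 1 + 1 * |b - B * Q| := by
        refine add_le_add (mul_le_mul_of_nonneg_left ?_ (abs_nonneg _))
          (mul_le_mul_of_nonneg_right ?_ (abs_nonneg _))
        · rw [abs_of_nonneg hb0]; exact hb1
        · rw [abs_of_nonneg (mul_nonneg hA0 hP0)]; nlinarith
    _ = |a - A * P| + |b - B * Q| := by ring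

private lemma avg_le_add {w u v : ℕ → ℝ} (h : ∀ i, w i ≤ u i + v i) (n : ℕ) :
    (∑ i ∈ Finset.range n, w i)/(n:ℝ)
      ≤ (∑ i ∈ Finset.range n, u i)/(n:ℝ) + (∑ i ∈ Finset.range n, v i)/(n:ℝ) := by
  rcases Nat.eq_zero_or_pos n with hn | hn
  · subst hn; simp
  · have hnpos : (0:ℝ) < n := by exact_mod_cast hn
    rw [← add_div, div_le_div_iff_of_pos_right hnpos]
    calc (∑ i ∈ Finset.range n, w i) ≤ ∑ i ∈ Finset.range n, (u i + v i) :=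
          Finset.sum_le_sum fun i _ => h i
      _ = _ := Finset.sum_add_distrib

private lemma avg_le_combine {w : ℕ → ℝ} {wk : ℕ → ℕ → ℝ} {r : ℕ → ℝ} {N n : ℕ}
    (hn : 1 ≤ n) (hw : ∀ i, w i ≤ (∑ k ∈ Finset.range N, wk k i) + 2 * r i) :
    (∑ i ∈ Finset.range n, w i)/(n:ℝ)
      ≤ (∑ k ∈ Finset.range N, (∑ i ∈ Finset.range n, wk k i)/(n:ℝ))
        + 2 * ((∑ i ∈ Finset.range n, r i)/(n:ℝ)) := by
  have hnpos : (0:ℝ) < n := by exact_mod_cast hn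
  have h1 : (∑ i ∈ Finset.range n, w i)
      ≤ (∑ k ∈ Finset.range N, ∑ i ∈ Finset.range n, wk k i)
        + 2 * (∑ i ∈ Finset.range n, r i) := by
    calc (∑ i ∈ Finset.range n, w i)
        ≤ ∑ i ∈ Finset.range n, ((∑ k ∈ Finset.range N, wk k i) + 2 * r i) :=
          Finset.sum_le_sum fun i _ => hw i
      _ = (∑ i ∈ Finset.range n, ∑ k ∈ Finset.range N, wk k i)
          + 2 * (∑ i ∈ Finset.range n, r i) := by
          rw [Finset.sum_add_distrib, Finset.mul_sum]
      _ = _ := by rw [Finset.sum_comm]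
  calc (∑ i ∈ Finset.range n, w i)/(n:ℝ)
      ≤ ((∑ k ∈ Finset.range N, ∑ i ∈ Finset.range n, wk k i)
          + 2 * (∑ i ∈ Finset.range n, r i))/(n:ℝ) := by
        exact div_le_div_of_nonneg_right h1 hnpos.le
    _ = _ := by rw [add_div, Finset.sum_div, mul_div_assoc]

end Main
section Backward
variable {A B C : Type*} [MeasurableSpace A] [MeasurableSpace B] [MeasurableSpace C]

private lemma owm_prod (μ : Measure (ℕ → A)) [IsProbabilityMeasure μ]
    (hμ : μ.map seqShift = μ)
    (ν₁ : Kernel (ℕ → A) (ℕ → B)) (ν₂ : Kernel (ℕ → A) (ℕ → C))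
    [IsMarkovKernel ν₁] [IsMarkovKernel ν₂]
    (hν₁ : ∀ G : Set (ℕ → B), MeasurableSet G →
      ∀ᵐ x ∂μ, ν₁ x (seqShift ⁻¹' G) = ν₁ (seqShift x) G)
    (hν₂ : ∀ H : Set (ℕ → C), MeasurableSet H →
      ∀ᵐ x ∂μ, ν₂ x (seqShift ⁻¹' H) = ν₂ (seqShift x) H)
    (h1 : OutputWeaklyMixing ν₁ μ seqShift) (h2 : OutputWeaklyMixing ν₂ μ seqShift) :
    ∀ (G : Set ((ℕ → B) × (ℕ → C))), MeasurableSet G → ∀ (G' : Set ((ℕ → B) × (ℕ → C))),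
      MeasurableSet G' →
      ∀ᵐ x ∂μ, Tendsto (fun n : ℕ => (∑ i ∈ Finset.range n,
          wmTerm ((ν₁ ×ₖ ν₂) x) (Prod.map seqShift seqShift) G G' i) / (n : ℝ))
        atTop (𝓝 0) := by
  set T : (ℕ → B) × (ℕ → C) → (ℕ → B) × (ℕ → C) := Prod.map seqShift seqShift with hT
  set κ := ν₁ ×ₖ ν₂ with hκ
  have hmp : MeasurePreserving seqShift μ μ := ⟨measurable_seqShift, hμ⟩
  have hTm : Measurable T := measurable_seqShift.prodMap measurable_seqShift
  have hrect : ∀ (x : ℕ → A) (V : Set (ℕ → B)) (W : Set (ℕ → C)),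
      κ x (V ×ˢ W) = ν₁ x V * ν₂ x W := fun x V W => by
    rw [hκ, Kernel.prod_apply, Measure.prod_prod]
  have hpre : ∀ (i : ℕ) (V : Set (ℕ → B)) (W : Set (ℕ → C)),
      (T^[i]) ⁻¹' (V ×ˢ W) = ((seqShift^[i]) ⁻¹' V) ×ˢ ((seqShift^[i]) ⁻¹' W) := fun i V W => by
    rw [hT, Prod.map_iterate, Set.preimage_prod_map_prod]
  -- base case: both rectangles
  have hbase : ∀ (D D' : Set (ℕ → B)) (E E' : Set (ℕ → C)), MeasurableSet D → MeasurableSet D' →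
      MeasurableSet E → MeasurableSet E' →
      ∀ᵐ x ∂μ, Tendsto (fun n : ℕ => (∑ i ∈ Finset.range n,
          wmTerm (κ x) T (D ×ˢ E) (D' ×ˢ E') i) / (n : ℝ)) atTop (𝓝 0) := by
    intro D D' E E' hD hD' hE hE'
    filter_upwards [h1 D D' hD hD', h2 E E' hE hE'] with x hx1 hx2
    have hsum : Tendsto (fun n : ℕ =>
        (∑ i ∈ Finset.range n,
          |((ν₁ x) ((seqShift^[i]) ⁻¹' D ∩ D')).toReal -
            ((ν₁ x) ((seqShift^[i]) ⁻¹' D)).toReal * ((ν₁ x) D').toReal|) / (n : ℝ)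
        + (∑ i ∈ Finset.range n,
          |((ν₂ x) ((seqShift^[i]) ⁻¹' E ∩ E')).toReal -
            ((ν₂ x) ((seqShift^[i]) ⁻¹' E)).toReal * ((ν₂ x) E').toReal|) / (n : ℝ))
        atTop (𝓝 0) := by
      simpa using hx1.add hx2
    refine squeeze_zero (fun n => by
      exact div_nonneg (Finset.sum_nonneg fun i _ => wmTerm_nonneg _ _ _ _ _) (Nat.cast_nonneg n))
      (fun n => ?_) hsum
    refine avg_le_add (fun i => ?_) n
    have hterm : wmTerm (κ x) T (D ×ˢ E) (D' ×ˢ E') i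
        = |((ν₁ x) ((seqShift^[i]) ⁻¹' D ∩ D')).toReal * ((ν₂ x) ((seqShift^[i]) ⁻¹' E ∩ E')).toReal
          - ((ν₁ x) ((seqShift^[i]) ⁻¹' D)).toReal * ((ν₂ x) ((seqShift^[i]) ⁻¹' E)).toReal
            * (((ν₁ x) D').toReal * ((ν₂ x) E').toReal)| := by
      unfold wmTerm
      rw [hpre, Set.prod_inter_prod, hrect, hrect, hrect,
        ENNReal.toReal_mul, ENNReal.toReal_mul, ENNReal.toReal_mul]
    rw [hterm]
    exact abs_prod_mix ENNReal.toReal_nonneg (rto_le_one (ν₂ x) _)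
      ENNReal.toReal_nonneg (rto_le_one (ν₁ x) _)
      ENNReal.toReal_nonneg (rto_le_one (ν₁ x) _)
  -- Stage I : arbitrary G, rectangle G'
  have hSI : ∀ (D' : Set (ℕ → B)) (E' : Set (ℕ → C)), MeasurableSet D' → MeasurableSet E' →
      ∀ (G : Set ((ℕ → B) × (ℕ → C))), MeasurableSet G →
      ∀ᵐ x ∂μ, Tendsto (fun n : ℕ =>
        (∑ i ∈ Finset.range n, wmTerm (κ x) T G (D' ×ˢ E') i) / (n : ℝ)) atTop (𝓝 0) := by
    intro D' E' hD' hE'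
    have hG'm : MeasurableSet (D' ×ˢ E') := hD'.prod hE'
    refine fun G hGmeas => MeasurableSpace.induction_on_inter
      (C := fun W _ => ∀ᵐ x ∂μ, Tendsto (fun n : ℕ =>
        (∑ i ∈ Finset.range n, wmTerm (κ x) T W (D' ×ˢ E') i) / (n : ℝ)) atTop (𝓝 0))
      generateFrom_prod.symm isPiSystem_prod ?_ ?_ ?_ ?_ G hGmeas
    · refine Filter.Eventually.of_forall fun x => ?_
      have hzero : ∀ i, wmTerm (κ x) T (∅ : Set _) (D' ×ˢ E') i = 0 := by
        intro i; unfold wmTerm; simp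
      have heq : (fun n : ℕ => (∑ i ∈ Finset.range n,
          wmTerm (κ x) T (∅ : Set _) (D' ×ˢ E') i) / (n : ℝ)) = fun _ => (0:ℝ) := by
        funext n; rw [Finset.sum_eq_zero fun i _ => hzero i, zero_div]
      rw [heq]; exact tendsto_const_nhds
    · rintro t ⟨D, hD, E, hE, rfl⟩
      simp only [Set.mem_setOf_eq] at hD hE
      exact hbase D D' E E' hD hD' hE hE'
    · intro t ht hC
      filter_upwards [hC] with x hx
      have heq : (fun n : ℕ => (∑ i ∈ Finset.range n,
          wmTerm (κ x) T tᶜ (D' ×ˢ E') i) / (n : ℝ)) = fun n : ℕ =>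
          (∑ i ∈ Finset.range n, wmTerm (κ x) T t (D' ×ˢ E') i) / (n : ℝ) := by
        funext n; congr 1
        exact Finset.sum_congr rfl fun i _ => wmTerm_compl_left (κ x) hTm ht _ i
      rw [heq]; exact hx
    · intro f hdisj hfm hC
      set R : ℕ → Set ((ℕ → B) × (ℕ → C)) := fun N => ⋃ k, f (N + k) with hRdef
      have hRm : ∀ N, MeasurableSet (R N) := fun N => MeasurableSet.iUnion fun k => hfm (N + k)
      have hRanti : Antitone R := by
        intro N M hNM
        refine Set.iUnion_subset fun k => ?_
        have hMk : M + k = N + (M - N + k) := by omega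
        rw [hRdef, hMk]
        exact Set.subset_iUnion (fun j => f (N + j)) (M - N + k)
      have hRempty : (⋂ N, R N) = ∅ := by
        rw [Set.eq_empty_iff_forall_notMem]
        intro y hy
        rw [Set.mem_iInter] at hy
        obtain ⟨k0, hk0⟩ := Set.mem_iUnion.mp (hy 0)
        obtain ⟨j, hj⟩ := Set.mem_iUnion.mp (hy (0 + k0 + 1))
        exact Set.disjoint_left.mp (hdisj (show 0 + k0 ≠ 0 + k0 + 1 + j by omega)) hk0 hj
      have htail0 : ∀ x', Tendsto (fun N => ((κ x') (R N)).toReal) atTop (𝓝 0) := by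
        intro x'
        have h := tendsto_measure_iInter_atTop (μ := κ x')
          (fun N => (hRm N).nullMeasurableSet) hRanti ⟨0, measure_ne_top _ _⟩
        rw [hRempty, measure_empty] at h
        have h2 := (ENNReal.tendsto_toReal (by simp : (0:ℝ≥0∞) ≠ ⊤)).comp h
        simpa [Function.comp_def] using h2
      have hgm : ∀ N, Measurable (fun x' => ((κ x') (R N)).toReal) :=
        fun N => (Kernel.measurable_coe κ (hRm N)).ennreal_toReal
      have hams := ams_control μ hmp hgm (fun N x' => ENNReal.toReal_nonneg)
        (fun N x' => rto_le_one (κ x') _) htail0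
      have hshift : ∀ᵐ x ∂μ, ∀ N i', κ x ((T^[i']) ⁻¹' (R N)) = κ (seqShift^[i'] x) (R N) :=
        ae_all_iff.mpr fun N => ae_all_iff.mpr fun i' =>
          prod_shift_ae μ ν₁ ν₂ hμ hν₁ hν₂ i' (R N) (hRm N)
      filter_upwards [hams, hshift, ae_all_iff.mpr hC] with x hx1 hx2 hx3
      refine tendsto_avg_zero (fun n => div_nonneg
        (Finset.sum_nonneg fun i _ => wmTerm_nonneg _ _ _ _ _) (Nat.cast_nonneg n))
        (fun ε hε => ?_)
      obtain ⟨N, hN⟩ := hx1 (ε/4) (by linarith)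
      have hev1 : ∀ᶠ n in atTop, ∀ k ∈ Finset.range N,
          (∑ i ∈ Finset.range n, wmTerm (κ x) T (f k) (D' ×ˢ E') i) / (n : ℝ)
            < ε / (2*(N+1)) := by
        rw [eventually_all_finset]
        intro k _
        exact (hx3 k).eventually_lt_const (by positivity)
      filter_upwards [hev1, eventually_ge_atTop 1] with n hn1 hn2
      have hnpos : (0:ℝ) < n := by exact_mod_cast hn2
      have hper : ∀ i, wmTerm (κ x) T (⋃ k, f k) (D' ×ˢ E') i
          ≤ (∑ k ∈ Finset.range N, wmTerm (κ x) T (f k) (D' ×ˢ E') i)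
            + 2 * (((κ (seqShift^[i] x)) (R N)).toReal) := by
        intro i
        have h := wmTerm_iUnion_le (κ x) hTm hfm hdisj hG'm i N
        rwa [hx2 N i] at h
      have hcomb := avg_le_combine hn2 hper
      have hbound1 : (∑ k ∈ Finset.range N, (∑ i ∈ Finset.range n,
          wmTerm (κ x) T (f k) (D' ×ˢ E') i) / (n : ℝ)) ≤ N * (ε/(2*(N+1))) := by
        calc _ ≤ ∑ _k ∈ Finset.range N, ε/(2*(N+1)) :=
              Finset.sum_le_sum fun k hk => (hn1 k hk).le
          _ = N * (ε/(2*(N+1))) := by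
              rw [Finset.sum_const, Finset.card_range, nsmul_eq_mul]
      have hbound2 : (∑ i ∈ Finset.range n, ((κ (seqShift^[i] x)) (R N)).toReal) / (n:ℝ)
          ≤ ε/4 := by
        rw [div_le_iff₀ hnpos]
        have h5 := hN n hn2
        linarith
      have hN1 : (N:ℝ) * (ε/(2*(N+1))) ≤ ε/2 := by
        have : (N:ℝ) * (ε/(2*(N+1))) = ε * (N/(2*(N+1))) := by ring
        rw [this]
        have hfrac : (N:ℝ)/(2*(N+1)) ≤ 1/2 := by
          rw [div_le_div_iff₀ (by positivity) (by norm_num)]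
          linarith
        calc ε * ((N:ℝ)/(2*(N+1))) ≤ ε * (1/2) :=
              mul_le_mul_of_nonneg_left hfrac hε.le
          _ = ε/2 := by ring
      refine le_trans hcomb (le_trans (add_le_add hbound1
        (mul_le_mul_of_nonneg_left hbound2 (by norm_num : (0:ℝ) ≤ 2))) ?_)
      linarith [hN1]
  -- Stage II : arbitrary G, arbitrary G'
  intro G hG
  refine fun G' hG' => MeasurableSpace.induction_on_inter
    (C := fun W _ => ∀ᵐ x ∂μ, Tendsto (fun n : ℕ =>
      (∑ i ∈ Finset.range n, wmTerm (κ x) T G W i) / (n : ℝ)) atTop (𝓝 0))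
    generateFrom_prod.symm isPiSystem_prod ?_ ?_ ?_ ?_ G' hG'
  · refine Filter.Eventually.of_forall fun x => ?_
    have hzero : ∀ i, wmTerm (κ x) T G (∅ : Set _) i = 0 := by
      intro i; unfold wmTerm; simp
    have heq : (fun n : ℕ => (∑ i ∈ Finset.range n,
        wmTerm (κ x) T G (∅ : Set _) i) / (n : ℝ)) = fun _ => (0:ℝ) := by
      funext n; rw [Finset.sum_eq_zero fun i _ => hzero i, zero_div]
    rw [heq]; exact tendsto_const_nhds
  · rintro t ⟨D', hD', E', hE', rfl⟩
    simp only [Set.mem_setOf_eq] at hD' hE'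
    exact hSI D' E' hD' hE' G hG
  · intro t ht hC
    filter_upwards [hC] with x hx
    have heq : (fun n : ℕ => (∑ i ∈ Finset.range n,
        wmTerm (κ x) T G tᶜ i) / (n : ℝ)) = fun n : ℕ =>
        (∑ i ∈ Finset.range n, wmTerm (κ x) T G t i) / (n : ℝ) := by
      funext n; congr 1
      exact Finset.sum_congr rfl fun i _ => wmTerm_compl_right (κ x) T G ht i
    rw [heq]; exact hx
  · intro f hdisj hfm hC
    set R : ℕ → Set ((ℕ → B) × (ℕ → C)) := fun N => ⋃ k, f (N + k) with hRdef
    have hRm : ∀ N, MeasurableSet (R N) := fun N => MeasurableSet.iUnion fun k => hfm (N + k)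
    have hRanti : Antitone R := by
      intro N M hNM
      refine Set.iUnion_subset fun k => ?_
      have hMk : M + k = N + (M - N + k) := by omega
      rw [hRdef, hMk]
      exact Set.subset_iUnion (fun j => f (N + j)) (M - N + k)
    have hRempty : (⋂ N, R N) = ∅ := by
      rw [Set.eq_empty_iff_forall_notMem]
      intro y hy
      rw [Set.mem_iInter] at hy
      obtain ⟨k0, hk0⟩ := Set.mem_iUnion.mp (hy 0)
      obtain ⟨j, hj⟩ := Set.mem_iUnion.mp (hy (0 + k0 + 1))
      exact Set.disjoint_left.mp (hdisj (show 0 + k0 ≠ 0 + k0 + 1 + j by omega)) hk0 hj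
    filter_upwards [ae_all_iff.mpr hC] with x hx3
    refine tendsto_avg_zero (fun n => div_nonneg
      (Finset.sum_nonneg fun i _ => wmTerm_nonneg _ _ _ _ _) (Nat.cast_nonneg n))
      (fun ε hε => ?_)
    have htail : Tendsto (fun N => ((κ x) (R N)).toReal) atTop (𝓝 0) := by
      have h := tendsto_measure_iInter_atTop (μ := κ x)
        (fun N => (hRm N).nullMeasurableSet) hRanti ⟨0, measure_ne_top _ _⟩
      rw [hRempty, measure_empty] at h
      have h2 := (ENNReal.tendsto_toReal (by simp : (0:ℝ≥0∞) ≠ ⊤)).comp h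
      simpa [Function.comp_def] using h2
    obtain ⟨N, hNR⟩ := (htail.eventually_lt_const (by positivity : (0:ℝ) < ε/4)).exists
    have hev1 : ∀ᶠ n in atTop, ∀ k ∈ Finset.range N,
        (∑ i ∈ Finset.range n, wmTerm (κ x) T G (f k) i) / (n : ℝ) < ε / (2*(N+1)) := by
      rw [eventually_all_finset]
      intro k _
      exact (hx3 k).eventually_lt_const (by positivity)
    filter_upwards [hev1, eventually_ge_atTop 1] with n hn1 hn2
    have hnpos : (0:ℝ) < n := by exact_mod_cast hn2
    have hper : ∀ i, wmTerm (κ x) T G (⋃ k, f k) i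
        ≤ (∑ k ∈ Finset.range N, wmTerm (κ x) T G (f k) i) + 2 * ((κ x) (R N)).toReal :=
      fun i => wmTerm_iUnion_le_right (κ x) hTm hfm hdisj hG i N
    have hcomb := avg_le_combine hn2 hper
    have hconst : (∑ _i ∈ Finset.range n, ((κ x) (R N)).toReal) / (n:ℝ)
        = ((κ x) (R N)).toReal := by
      rw [Finset.sum_const, Finset.card_range, nsmul_eq_mul]
      field_simp
    have hbound1 : (∑ k ∈ Finset.range N, (∑ i ∈ Finset.range n,
        wmTerm (κ x) T G (f k) i) / (n : ℝ)) ≤ N * (ε/(2*(N+1))) := by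
      calc _ ≤ ∑ _k ∈ Finset.range N, ε/(2*(N+1)) :=
            Finset.sum_le_sum fun k hk => (hn1 k hk).le
        _ = N * (ε/(2*(N+1))) := by
            rw [Finset.sum_const, Finset.card_range, nsmul_eq_mul]
    have hN1 : (N:ℝ) * (ε/(2*(N+1))) ≤ ε/2 := by
      have : (N:ℝ) * (ε/(2*(N+1))) = ε * (N/(2*(N+1))) := by ring
      rw [this]
      have hfrac : (N:ℝ)/(2*(N+1)) ≤ 1/2 := by
        rw [div_le_div_iff₀ (by positivity) (by norm_num)]
        linarith
      calc ε * ((N:ℝ)/(2*(N+1))) ≤ ε * (1/2) :=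
            mul_le_mul_of_nonneg_left hfrac hε.le
        _ = ε/2 := by ring
    rw [hconst] at hcomb
    refine le_trans hcomb (le_trans (add_le_add hbound1
      (mul_le_mul_of_nonneg_left hNR.le (by norm_num : (0:ℝ) ≤ 2))) ?_)
    linarith [hN1]


end Backward
/-- For channels stationary w.r.t. a stationary source, the channel product is output weakly
mixing iff both channels are output weakly mixing. -/

theorem channel_prod_owm_iff {A B C : Type*}
    [MeasurableSpace A] [MeasurableSpace B] [MeasurableSpace C]
    (μ : Measure (ℕ → A)) [IsProbabilityMeasure μ] (hμ : μ.map seqShift = μ)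
    (ν₁ : Kernel (ℕ → A) (ℕ → B)) (ν₂ : Kernel (ℕ → A) (ℕ → C))
    [IsMarkovKernel ν₁] [IsMarkovKernel ν₂]
    (hν₁ : ∀ G : Set (ℕ → B), MeasurableSet G →
      ∀ᵐ x ∂μ, ν₁ x (seqShift ⁻¹' G) = ν₁ (seqShift x) G)
    (hν₂ : ∀ H : Set (ℕ → C), MeasurableSet H →
      ∀ᵐ x ∂μ, ν₂ x (seqShift ⁻¹' H) = ν₂ (seqShift x) H) :
    OutputWeaklyMixing (ν₁ ×ₖ ν₂) μ (Prod.map seqShift seqShift) ↔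
      (OutputWeaklyMixing ν₁ μ seqShift ∧ OutputWeaklyMixing ν₂ μ seqShift) := by
  constructor
  · intro h
    constructor
    · intro G G' hG hG'
      filter_upwards [h (G ×ˢ Set.univ) (G' ×ˢ Set.univ)
        (hG.prod MeasurableSet.univ) (hG'.prod MeasurableSet.univ)] with x hx
      have key : ∀ i : ℕ,
          |(((ν₁ ×ₖ ν₂) x) (((Prod.map seqShift seqShift)^[i]) ⁻¹' (G ×ˢ Set.univ)
              ∩ (G' ×ˢ Set.univ))).toReal
            - (((ν₁ ×ₖ ν₂) x) (((Prod.map seqShift seqShift)^[i]) ⁻¹' (G ×ˢ Set.univ))).toReal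
              * (((ν₁ ×ₖ ν₂) x) (G' ×ˢ Set.univ)).toReal|
          = |((ν₁ x) ((seqShift^[i]) ⁻¹' G ∩ G')).toReal
            - ((ν₁ x) ((seqShift^[i]) ⁻¹' G)).toReal * ((ν₁ x) G').toReal| := by
        intro i
        simp [Prod.map_iterate, Set.preimage_prod_map_prod, Set.prod_inter_prod,
          Kernel.prod_apply, Measure.prod_prod]
      simpa only [key] using hx
    · intro G G' hG hG'
      filter_upwards [h (Set.univ ×ˢ G) (Set.univ ×ˢ G')
        (MeasurableSet.univ.prod hG) (MeasurableSet.univ.prod hG')] with x hx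
      have key : ∀ i : ℕ,
          |(((ν₁ ×ₖ ν₂) x) (((Prod.map seqShift seqShift)^[i]) ⁻¹' (Set.univ ×ˢ G)
              ∩ (Set.univ ×ˢ G'))).toReal
            - (((ν₁ ×ₖ ν₂) x) (((Prod.map seqShift seqShift)^[i]) ⁻¹' (Set.univ ×ˢ G))).toReal
              * (((ν₁ ×ₖ ν₂) x) (Set.univ ×ˢ G')).toReal|
          = |((ν₂ x) ((seqShift^[i]) ⁻¹' G ∩ G')).toReal
            - ((ν₂ x) ((seqShift^[i]) ⁻¹' G)).toReal * ((ν₂ x) G').toReal| := by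
        intro i
        simp [Prod.map_iterate, Set.preimage_prod_map_prod, Set.prod_inter_prod,
          Kernel.prod_apply, Measure.prod_prod]
      simpa only [key] using hx
  · rintro ⟨h1, h2⟩
    intro G G' hG hG'
    exact owm_prod μ hμ ν₁ ν₂ hν₁ hν₂ h1 h2 G hG G' hG'
end

section
/- Let ν be a stationary ergodic channel from A^I to itself and f : A^I → B^I a stationary measurable function (f ∘ T_A = T_B ∘ f). Then the cascade channel F = νf (first apply ν, then the deterministic channel induced by f) is a stationary and ergodic channel: for every stationary ergodic source X with distribution μ, the joint process (X, F(X)) is stationary and ergodic. -/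
open MeasureTheory ProbabilityTheory
open scoped ProbabilityTheory

/-- A measure is stationary for a transformation. -/
def Stationary {X : Type*} [MeasurableSpace X] (p : Measure X) (S : X → X) : Prop :=
  p.map S = p

/-- All invariant sets have measure 0 or 1. -/
def ErgodicInv {X : Type*} [MeasurableSpace X] (p : Measure X) (S : X → X) : Prop :=
  ∀ O : Set X, MeasurableSet O → S ⁻¹' O = O → p O = 0 ∨ p O = 1

lemma compProd_map_aux {α β γ : Type*} [MeasurableSpace α] [MeasurableSpace β] [MeasurableSpace γ]
    (μ : Measure α) [SFinite μ] (ν : Kernel α β) [IsSFiniteKernel ν]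
    (f : β → γ) (hf : Measurable f) :
    μ ⊗ₘ (ν.map f) = (μ ⊗ₘ ν).map (Prod.map id f) := by
  ext s hs
  rw [Measure.map_apply (measurable_id.prodMap hf) hs,
    Measure.compProd_apply hs, Measure.compProd_apply ((measurable_id.prodMap hf) hs)]
  refine lintegral_congr fun a => ?_
  rw [Kernel.map_apply' _ hf _ (measurable_prodMk_left hs)]
  congr 1

theorem measurableSeqShift {A : Type*} [MeasurableSpace A] :
    Measurable (seqShift (A := A)) :=
  measurable_pi_lambda _ fun i => measurable_pi_apply (i + 1)

/-- The cascade of a stationary ergodic channel `ν` with a stationary deterministic channel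
induced by `f` is a stationary ergodic channel. -/
theorem cascade_stationary_ergodic {A B : Type*} [MeasurableSpace A] [MeasurableSpace B]
    (ν : Kernel (ℕ → A) (ℕ → A)) [IsMarkovKernel ν]
    (hν : ∀ μ : Measure (ℕ → A), IsProbabilityMeasure μ →
      Stationary μ seqShift → ErgodicInv μ seqShift →
        Stationary (μ ⊗ₘ ν) (Prod.map seqShift seqShift) ∧
          ErgodicInv (μ ⊗ₘ ν) (Prod.map seqShift seqShift))
    (f : (ℕ → A) → (ℕ → B)) (hf : Measurable f)
    (hfs : f ∘ seqShift = seqShift ∘ f) :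
    ∀ μ : Measure (ℕ → A), IsProbabilityMeasure μ →
      Stationary μ seqShift → ErgodicInv μ seqShift →
        Stationary (μ ⊗ₘ (Kernel.deterministic f hf ∘ₖ ν)) (Prod.map seqShift seqShift) ∧
          ErgodicInv (μ ⊗ₘ (Kernel.deterministic f hf ∘ₖ ν)) (Prod.map seqShift seqShift) := by
  intro μ hμP hμS hμE
  obtain ⟨hS, hE⟩ := hν μ hμP hμS hμE
  have hrw : μ ⊗ₘ (Kernel.deterministic f hf ∘ₖ ν) = (μ ⊗ₘ ν).map (Prod.map id f) := by
    rw [Kernel.deterministic_comp_eq_map, compProd_map_aux μ ν f hf]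
  have hg : Measurable (Prod.map (id : (ℕ → A) → ℕ → A) f) := measurable_id.prodMap hf
  have hshift : Measurable (Prod.map (seqShift (A := A)) (seqShift (A := A))) :=
    measurableSeqShift.prodMap measurableSeqShift
  have hshiftB : Measurable (Prod.map (seqShift (A := A)) (seqShift (A := B))) :=
    measurableSeqShift.prodMap measurableSeqShift
  have hcomm : Prod.map (seqShift (A := A)) (seqShift (A := B)) ∘ Prod.map id f
      = Prod.map id f ∘ Prod.map (seqShift (A := A)) (seqShift (A := A)) := by
    funext p
    have := congrFun hfs p.2
    simp only [Function.comp] at this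
    simp [Prod.map, ← this]
  constructor
  · rw [hrw, Stationary, Measure.map_map hshiftB hg, hcomm, ← Measure.map_map hg hshift, hS]
  · intro O hO hinv
    rw [hrw, Measure.map_apply hg hO]
    refine hE _ (hg hO) ?_
    have : Prod.map (seqShift (A := A)) (seqShift (A := A)) ⁻¹' (Prod.map id f ⁻¹' O)
        = Prod.map id f ⁻¹' (Prod.map (seqShift (A := A)) (seqShift (A := B)) ⁻¹' O) := by
      rw [← Set.preimage_comp, ← hcomm, Set.preimage_comp]
    rw [this, hinv]
end
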